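/- Let P be a partially ordered set with a commutative flow T, let F, G : P → Set be functors, fix η ∈ [0,∞), and let (φ, ψ) be a T_η-assignment between F and G. Let c < c' in P and write (c,c') := { x ∈ P : c < x < c' }. Suppose that for all s ≤ t in (c,c') the map F[s ≤ t] : F(s) → F(t) is a bijection, and that L_parL^{s,t}(φ) = 0 for all s < t in (c,c'). Then for all s < t in (c,c'), L_parL^{s,c'}(φ) = L_parL^{t,c'}(φ). -/

import Mathlib

open scoped NNReal ENNReal

universe u v

/-- A commutative flow on a partially ordered set `P`. -/
structure CFlow (P : Type u) [PartialOrder P] where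
  T : ℝ≥0 → P → P
  mono : ∀ ε : ℝ≥0, Monotone (T ε)
  T_zero : ∀ p : P, T 0 p = p
  T_add : ∀ (ε δ : ℝ≥0) (p : P), T (ε + δ) p = T ε (T δ p)
  le_T : ∀ (ε : ℝ≥0) (p : P), p ≤ T ε p
  T_le_T : ∀ {ε δ : ℝ≥0} (p : P), ε ≤ δ → T ε p ≤ T δ p

/-- A functor `P → Set` for a poset `P`. -/
structure PosetFunctor (P : Type u) [PartialOrder P] where
  obj : P → Type v
  map : ∀ {p q : P}, p ≤ q → obj p → obj q
  map_id : ∀ (p : P) (a : obj p), map (le_refl p) a = a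
  map_comp : ∀ {p q r : P} (h₁ : p ≤ q) (h₂ : q ≤ r) (a : obj p),
      map h₂ (map h₁ a) = map (h₁.trans h₂) a

/-- The merging distance `d_q^F(a,b)`, valued in `[0,∞]`. -/
noncomputable def mergeDist {P : Type u} [PartialOrder P] (T : CFlow P)
    (F : PosetFunctor P) (q : P) (a b : F.obj q) : ℝ≥0∞ :=
  sInf {x : ℝ≥0∞ | ∃ ε : ℝ≥0, x = (ε : ℝ≥0∞) ∧
    F.map (T.le_T ε q) a = F.map (T.le_T ε q) b}

/-- The set `D_q^F` of reducing constants of `q` on `F`. -/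
def reducingSet {P : Type u} [PartialOrder P] (T : CFlow P)
    (F : PosetFunctor P) (q : P) : Set ℝ≥0 :=
  {δ | ∀ (γ₁ γ₂ : ℝ≥0) (h₁ : γ₁ < δ) (h₂ : δ ≤ γ₂),
    ¬ Function.Injective (F.map (T.T_le_T q (h₁.le.trans h₂)))}

/-- The left parallelogram loss `L_parL^{p,q}(φ)`. -/
noncomputable def LparL {P : Type u} [PartialOrder P] (T : CFlow P)
    (F G : PosetFunctor P) (η : ℝ≥0)
    (φ : ∀ p : P, F.obj p → G.obj (T.T η p)) {p q : P} (hpq : p ≤ q) : ℝ≥0∞ :=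
  ⨆ a : F.obj p, mergeDist T G (T.T η q)
    (φ q (F.map hpq a)) (G.map (T.mono η hpq) (φ p a))

/-- The right parallelogram loss `L_parR^{p,q}(ψ)`. -/
noncomputable def LparR {P : Type u} [PartialOrder P] (T : CFlow P)
    (F G : PosetFunctor P) (η : ℝ≥0)
    (ψ : ∀ p : P, G.obj p → F.obj (T.T η p)) {p q : P} (hpq : p ≤ q) : ℝ≥0∞ :=
  ⨆ b : G.obj p, mergeDist T F (T.T η q)
    (ψ q (G.map hpq b)) (F.map (T.mono η hpq) (ψ p b))

/-- The lower triangle loss `L_down^p(φ,ψ)`. -/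
noncomputable def Ldown {P : Type u} [PartialOrder P] (T : CFlow P)
    (F G : PosetFunctor P) (η : ℝ≥0)
    (φ : ∀ p : P, F.obj p → G.obj (T.T η p))
    (ψ : ∀ p : P, G.obj p → F.obj (T.T η p)) (p : P) : ℝ≥0∞ :=
  ⨆ a : F.obj p, mergeDist T F (T.T η (T.T η p))
    (ψ (T.T η p) (φ p a))
    (F.map ((T.le_T η p).trans (T.le_T η (T.T η p))) a)

/-- The upper triangle loss `L_up^p(φ,ψ)`. -/
noncomputable def Lup {P : Type u} [PartialOrder P] (T : CFlow P)
    (F G : PosetFunctor P) (η : ℝ≥0)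
    (φ : ∀ p : P, F.obj p → G.obj (T.T η p))
    (ψ : ∀ p : P, G.obj p → F.obj (T.T η p)) (p : P) : ℝ≥0∞ :=
  ⨆ b : G.obj p, mergeDist T G (T.T η (T.T η p))
    (φ (T.T η p) (ψ p b))
    (G.map ((T.le_T η p).trans (T.le_T η (T.T η p))) b)

section Helpers

variable {P : Type u} [PartialOrder P] (T : CFlow P) (F : PosetFunctor P)

lemma merge_mono (q : P) (a b : F.obj q) {ε δ : ℝ≥0} (hεδ : ε ≤ δ)
    (h : F.map (T.le_T ε q) a = F.map (T.le_T ε q) b) :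
    F.map (T.le_T δ q) a = F.map (T.le_T δ q) b := by
  have h2 := congrArg (F.map (T.T_le_T q hεδ)) h
  rwa [F.map_comp, F.map_comp] at h2

lemma mergeDist_le_of_merge (q : P) (a b : F.obj q) {ε : ℝ≥0}
    (h : F.map (T.le_T ε q) a = F.map (T.le_T ε q) b) :
    mergeDist T F q a b ≤ (ε : ℝ≥0∞) :=
  sInf_le ⟨ε, rfl, h⟩

lemma merge_of_lt_mergeDist (q : P) (a b : F.obj q) {ε : ℝ≥0}
    (h : mergeDist T F q a b < (ε : ℝ≥0∞)) :
    F.map (T.le_T ε q) a = F.map (T.le_T ε q) b := by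
  rw [mergeDist, sInf_lt_iff] at h
  obtain ⟨x, ⟨ε', rfl, hm⟩, hlt⟩ := h
  exact merge_mono T F q a b (le_of_lt (by exact_mod_cast hlt)) hm

lemma mergeDist_comm (q : P) (a b : F.obj q) :
    mergeDist T F q a b = mergeDist T F q b a := by
  unfold mergeDist
  congr 1
  ext x
  constructor <;> rintro ⟨ε, rfl, h⟩ <;> exact ⟨ε, rfl, h.symm⟩

lemma mergeDist_le_of_right_zero (q : P) (u v w : F.obj q)
    (h0 : mergeDist T F q v w = 0) :
    mergeDist T F q u w ≤ mergeDist T F q u v := by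
  refine ENNReal.le_of_forall_pos_le_add fun ε hε hfin => ?_
  set γ : ℝ≥0 := (mergeDist T F q u v).toNNReal + ε with hγ
  have hcoe : (γ : ℝ≥0∞) = mergeDist T F q u v + (ε : ℝ≥0∞) := by
    rw [hγ, ENNReal.coe_add, ENNReal.coe_toNNReal hfin.ne]
  have huv : F.map (T.le_T γ q) u = F.map (T.le_T γ q) v := by
    refine merge_of_lt_mergeDist T F q u v ?_
    rw [hcoe]
    exact ENNReal.lt_add_right hfin.ne (by exact_mod_cast hε.ne')
  have hvw : F.map (T.le_T γ q) v = F.map (T.le_T γ q) w := by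
    refine merge_of_lt_mergeDist T F q v w ?_
    rw [h0]
    exact_mod_cast lt_of_lt_of_le hε (le_add_self)
  calc mergeDist T F q u w ≤ (γ : ℝ≥0∞) :=
        mergeDist_le_of_merge T F q u w (huv.trans hvw)
    _ = _ := hcoe

lemma mergeDist_eq_of_right_zero (q : P) (u v w : F.obj q)
    (h0 : mergeDist T F q v w = 0) :
    mergeDist T F q u v = mergeDist T F q u w :=
  le_antisymm
    (mergeDist_le_of_right_zero T F q u w v
      ((mergeDist_comm T F q v w) ▸ h0))
    (mergeDist_le_of_right_zero T F q u v w h0)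

lemma mergeDist_map_le {q q' : P} (h : q ≤ q') (a b : F.obj q) :
    mergeDist T F q' (F.map h a) (F.map h b) ≤ mergeDist T F q a b := by
  refine sInf_le_sInf ?_
  rintro x ⟨ε, rfl, hm⟩
  refine ⟨ε, rfl, ?_⟩
  have key : ∀ z : F.obj q,
      F.map (T.le_T ε q') (F.map h z) = F.map (T.mono ε h) (F.map (T.le_T ε q) z) := by
    intro z
    rw [F.map_comp, F.map_comp]
  rw [key a, key b, hm]

end Helpers

/-- If `(c, c')` is a constant interval for `F` on which the left parallelogram losses
vanish, then all losses `L_parL^{s,c'}(φ)` for `s ∈ (c,c')` agree. -/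
theorem LparL_to_endpoint_const {P : Type u} [PartialOrder P]
    (T : CFlow P) (F G : PosetFunctor P) (η : ℝ≥0)
    (φ : ∀ p : P, F.obj p → G.obj (T.T η p))
    (ψ : ∀ p : P, G.obj p → F.obj (T.T η p))
    (c c' : P) (hcc : c < c')
    (hbij : ∀ s t : P, c < s → s < c' → c < t → t < c' → ∀ h : s ≤ t,
      Function.Bijective (F.map h))
    (hzero : ∀ s t : P, c < s → s < c' → c < t → t < c' → ∀ h : s < t,
      LparL T F G η φ h.le = 0) :
    ∀ s t : P, ∀ hcs : c < s, ∀ hsc : s < c', ∀ hct : c < t, ∀ htc : t < c',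
      s < t → LparL T F G η φ hsc.le = LparL T F G η φ htc.le := by
  intro s t hcs hsc hct htc hst
  have key : ∀ a : F.obj s,
      mergeDist T G (T.T η c') (φ c' (F.map hsc.le a))
        (G.map (T.mono η hsc.le) (φ s a))
      = mergeDist T G (T.T η c') (φ c' (F.map htc.le (F.map hst.le a)))
        (G.map (T.mono η htc.le) (φ t (F.map hst.le a))) := by
    intro a
    have e1 : F.map htc.le (F.map hst.le a) = F.map hsc.le a := F.map_comp _ _ _
    rw [e1]
    have h0 : mergeDist T G (T.T η t) (φ t (F.map hst.le a))
        (G.map (T.mono η hst.le) (φ s a)) = 0 := by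
      have hz := hzero s t hcs hsc hct htc hst
      simp only [LparL] at hz
      refine le_antisymm (le_trans ?_ hz.le) zero_le
      exact le_iSup (fun a => mergeDist T G (T.T η t) (φ t (F.map hst.le a))
        (G.map (T.mono η hst.le) (φ s a))) a
    have h0' : mergeDist T G (T.T η c')
        (G.map (T.mono η htc.le) (φ t (F.map hst.le a)))
        (G.map (T.mono η htc.le) (G.map (T.mono η hst.le) (φ s a))) = 0 :=
      le_antisymm ((mergeDist_map_le T G (T.mono η htc.le) _ _).trans h0.le) zero_le
    have e2 : G.map (T.mono η hsc.le) (φ s a)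
        = G.map (T.mono η htc.le) (G.map (T.mono η hst.le) (φ s a)) :=
      (G.map_comp _ _ _).symm
    rw [e2]
    exact (mergeDist_eq_of_right_zero T G (T.T η c') _ _ _ h0').symm
  have hb := hbij s t hcs hsc hct htc hst.le
  let e : F.obj s ≃ F.obj t := Equiv.ofBijective _ hb
  calc LparL T F G η φ hsc.le
      = ⨆ a : F.obj s, mergeDist T G (T.T η c') (φ c' (F.map htc.le (F.map hst.le a)))
          (G.map (T.mono η htc.le) (φ t (F.map hst.le a))) := iSup_congr key
    _ = ⨆ b : F.obj t, mergeDist T G (T.T η c') (φ c' (F.map htc.le b))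
          (G.map (T.mono η htc.le) (φ t b)) :=
        e.iSup_comp (g := fun b => mergeDist T G (T.T η c') (φ c' (F.map htc.le b))
          (G.map (T.mono η htc.le) (φ t b)))
    _ = LparL T F G η φ htc.le := rfl
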